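/- For a positive semidefinite σ and positive semidefinite ρ on ℂ^n with ρ ≪ σ, the operator R := √σ (√(√σ ρ √σ))⁺ √σ (with ⁺ the Moore–Penrose pseudoinverse) is positive semidefinite and satisfies R ρ R = σᵃ, the absolutely continuous part of σ with respect to ρ in the quantum Lebesgue decomposition. -/

import Mathlib

open Matrix
open scoped ComplexOrder

/-- The positive semidefinite square root of a positive semidefinite matrix
(junk value `0` on non-positive-semidefinite input). -/
noncomputable def msqrt {n : ℕ} (A : Matrix (Fin n) (Fin n) ℂ) : Matrix (Fin n) (Fin n) ℂ :=
  letI := Classical.propDecidable A.PosSemidef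
  if h : A.PosSemidef then
    h.1.eigenvectorUnitary.1 * diagonal ((↑) ∘ Real.sqrt ∘ h.1.eigenvalues) *
      (star h.1.eigenvectorUnitary : Matrix (Fin n) (Fin n) ℂ) else 0

/-- `μ ≪ ν`: the compression of `ν` to the support of `μ` is positive definite. -/
def AbsCont {n : ℕ} (μ ν : Matrix (Fin n) (Fin n) ℂ) : Prop :=
  ∀ x ∈ LinearMap.range μ.mulVecLin, x ≠ 0 → 0 < (star x ⬝ᵥ ν.mulVec x).re

/-- `G` is the Moore–Penrose generalized inverse of `A`. -/
def IsMoorePenroseInv {n : ℕ} (A G : Matrix (Fin n) (Fin n) ℂ) : Prop :=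
  A * G * A = A ∧ G * A * G = G ∧ (A * G)ᴴ = A * G ∧ (G * A)ᴴ = G * A

lemma msqrt_of_psd {n : ℕ} {A : Matrix (Fin n) (Fin n) ℂ} (hA : A.PosSemidef) :
    msqrt A = hA.1.eigenvectorUnitary.1 * diagonal ((↑) ∘ Real.sqrt ∘ hA.1.eigenvalues) *
      (star hA.1.eigenvectorUnitary : Matrix (Fin n) (Fin n) ℂ) := by
  unfold msqrt
  simp [hA]

lemma msqrt_psd {n : ℕ} {A : Matrix (Fin n) (Fin n) ℂ} (hA : A.PosSemidef) :
    (msqrt A).PosSemidef := by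
  rw [msqrt_of_psd hA]
  have hD : (diagonal ((↑) ∘ Real.sqrt ∘ hA.1.eigenvalues) : Matrix (Fin n) (Fin n) ℂ).PosSemidef :=
    posSemidef_diagonal_iff.mpr (fun i => Complex.zero_le_real.mpr (Real.sqrt_nonneg _))
  have := hD.mul_mul_conjTranspose_same (hA.1.eigenvectorUnitary : Matrix (Fin n) (Fin n) ℂ)
  simpa only [Unitary.coe_star, star_eq_conjTranspose] using this

lemma msqrt_mul_self {n : ℕ} {A : Matrix (Fin n) (Fin n) ℂ} (hA : A.PosSemidef) :
    msqrt A * msqrt A = A := by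
  rw [msqrt_of_psd hA]
  conv_rhs => rw [hA.1.spectral_theorem]
  have hu : (star hA.1.eigenvectorUnitary : Matrix (Fin n) (Fin n) ℂ) *
      hA.1.eigenvectorUnitary.1 = 1 := Unitary.coe_star_mul_self _
  have hD : (diagonal ((↑) ∘ Real.sqrt ∘ hA.1.eigenvalues) : Matrix (Fin n) (Fin n) ℂ) *
      diagonal ((↑) ∘ Real.sqrt ∘ hA.1.eigenvalues) = diagonal (RCLike.ofReal ∘ hA.1.eigenvalues) := by
    rw [diagonal_mul_diagonal]
    congr 1; funext i
    simp only [Function.comp_apply]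
    rw [← Complex.ofReal_mul, Real.mul_self_sqrt (hA.eigenvalues_nonneg i)]
    rfl
  calc _ = hA.1.eigenvectorUnitary.1 * ((diagonal ((↑) ∘ Real.sqrt ∘ hA.1.eigenvalues) : Matrix (Fin n) (Fin n) ℂ) *
      ((star hA.1.eigenvectorUnitary : Matrix (Fin n) (Fin n) ℂ) *
      hA.1.eigenvectorUnitary.1) * diagonal ((↑) ∘ Real.sqrt ∘ hA.1.eigenvalues)) *
      (star hA.1.eigenvectorUnitary : Matrix (Fin n) (Fin n) ℂ) := by simp only [mul_assoc]
    _ = _ := by rw [hu, mul_one, hD]; simp [Unitary.conjStarAlgAut_apply]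

lemma quad_congr {n : ℕ} (A M : Matrix (Fin n) (Fin n) ℂ) (z : Fin n → ℂ) :
    star (A.mulVec z) ⬝ᵥ M.mulVec (A.mulVec z) = star z ⬝ᵥ (Aᴴ * M * A).mulVec z := by
  rw [star_mulVec, mulVec_mulVec, dotProduct_mulVec, dotProduct_mulVec, vecMul_vecMul,
    mul_assoc]

lemma quad_self {n : ℕ} (B : Matrix (Fin n) (Fin n) ℂ) (z : Fin n → ℂ) :
    star z ⬝ᵥ (Bᴴ * B).mulVec z = star (B.mulVec z) ⬝ᵥ (B.mulVec z) := by
  rw [← mulVec_mulVec, dotProduct_mulVec, ← star_mulVec]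

lemma mp_unique {n : ℕ} {A G G' : Matrix (Fin n) (Fin n) ℂ}
    (h : IsMoorePenroseInv A G) (h' : IsMoorePenroseInv A G') : G = G' := by
  obtain ⟨h1, h2, h3, h4⟩ := h
  obtain ⟨h1', h2', h3', h4'⟩ := h'
  have hAG : A * G = A * G' := by
    calc A * G = (A * G' * A) * G := by rw [h1']
    _ = (A * G') * (A * G) := by noncomm_ring
    _ = (A * G')ᴴ * (A * G)ᴴ := by rw [h3, h3']
    _ = G'ᴴ * (A * G * A)ᴴ := by
        simp only [conjTranspose_mul]; noncomm_ring
    _ = G'ᴴ * Aᴴ := by rw [h1]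
    _ = (A * G')ᴴ := by rw [conjTranspose_mul]
    _ = A * G' := h3'
  have hGA : G * A = G' * A := by
    calc G * A = G * (A * G' * A) := by rw [h1']
    _ = (G * A) * (G' * A) := by noncomm_ring
    _ = (G * A)ᴴ * (G' * A)ᴴ := by rw [h4, h4']
    _ = (A * G * A)ᴴ * G'ᴴ := by
        simp only [conjTranspose_mul]; noncomm_ring
    _ = Aᴴ * G'ᴴ := by rw [h1]
    _ = (G' * A)ᴴ := by rw [conjTranspose_mul]
    _ = G' * A := h4'
  calc G = G * A * G := h2.symm
  _ = G' * A * G' := by rw [hGA, mul_assoc, hAG, ← mul_assoc]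
  _ = G' := h2'

set_option maxHeartbeats 1000000 in
/-- With `ρ ≪ σ`, the operator `R := √σ (√(√σ ρ √σ))⁺ √σ` is positive semidefinite and
`R ρ R` is the absolutely continuous part `σᵃ` of `σ` with respect to `ρ`: that is,
`R ρ R ≪ ρ`, and the remainder `σ − R ρ R` is positive semidefinite and singular with
respect to `ρ`. -/
theorem pseudoinverse_formula_ac_part {n : ℕ}
    (ρ σ G : Matrix (Fin n) (Fin n) ℂ)
    (hρ : ρ.PosSemidef) (hσ : σ.PosSemidef) (hρ0 : ρ ≠ 0) (hσ0 : σ ≠ 0)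
    (hAC : AbsCont ρ σ)
    (hG : IsMoorePenroseInv (msqrt (msqrt σ * ρ * msqrt σ)) G) :
    (msqrt σ * G * msqrt σ).PosSemidef ∧
    AbsCont ((msqrt σ * G * msqrt σ) * ρ * (msqrt σ * G * msqrt σ)) ρ ∧
    (σ - (msqrt σ * G * msqrt σ) * ρ * (msqrt σ * G * msqrt σ)).PosSemidef ∧
    ((σ - (msqrt σ * G * msqrt σ) * ρ * (msqrt σ * G * msqrt σ)) * ρ).trace = 0 := by
  set s := msqrt σ with hsdef
  have hs : s.PosSemidef := by rw [hsdef]; exact msqrt_psd hσ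
  have hs2 : s * s = σ := by rw [hsdef]; exact msqrt_mul_self hσ
  have hsH : sᴴ = s := hs.1
  have hT : (s * ρ * s).PosSemidef := by
    have := hρ.mul_mul_conjTranspose_same s
    rwa [hsH] at this
  set S := msqrt (s * ρ * s) with hSdef
  have hS : S.PosSemidef := by rw [hSdef]; exact msqrt_psd hT
  have hS2 : S * S = s * ρ * s := by rw [hSdef]; exact msqrt_mul_self hT
  have hSH : Sᴴ = S := hS.1
  clear_value S
  clear_value s
  clear hsdef hSdef
  obtain ⟨h1, h2, h3, h4⟩ := hG
  have hGmp : IsMoorePenroseInv S G := ⟨h1, h2, h3, h4⟩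
  have hGHmp : IsMoorePenroseInv S Gᴴ := by
    refine ⟨?_, ?_, ?_, ?_⟩
    · have := congrArg conjTranspose h1
      simpa only [conjTranspose_mul, hSH, mul_assoc] using this
    · have := congrArg conjTranspose h2
      simpa only [conjTranspose_mul, hSH, mul_assoc] using this
    · calc (S * Gᴴ)ᴴ = G * Sᴴ := by rw [conjTranspose_mul, conjTranspose_conjTranspose]
      _ = G * S := by rw [hSH]
      _ = (G * S)ᴴ := h4.symm
      _ = Sᴴ * Gᴴ := by rw [conjTranspose_mul]
      _ = S * Gᴴ := by rw [hSH]
    · calc (Gᴴ * S)ᴴ = Sᴴ * G := by rw [conjTranspose_mul, conjTranspose_conjTranspose]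
      _ = S * G := by rw [hSH]
      _ = (S * G)ᴴ := h3.symm
      _ = Gᴴ * Sᴴ := by rw [conjTranspose_mul]
      _ = Gᴴ * S := by rw [hSH]
  have hGH : Gᴴ = G := (mp_unique hGHmp hGmp)
  have hGpsd : G.PosSemidef := by
    have := hS.mul_mul_conjTranspose_same G
    rwa [hGH, h2] at this
  have hRpsd : (s * G * s).PosSemidef := by
    have := hGpsd.mul_mul_conjTranspose_same s
    rwa [hsH] at this
  have hkey : (s * G * s) * ρ * (s * G * s) = s * (S * G) * s := by
    have e1 : (s * G * s) * ρ * (s * G * s) = s * G * (s * ρ * s) * (G * s) := by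
      noncomm_ring
    rw [e1, ← hS2]
    calc s * G * (S * S) * (G * s) = s * ((G * S) * (S * G)) * s := by noncomm_ring
    _ = s * ((S * G) * (S * G)) * s := by
        have hc : G * S = S * G := by rw [← h4, conjTranspose_mul, hSH, hGH]
        rw [hc]
    _ = s * (S * G * S * G) * s := by noncomm_ring
    _ = s * (S * G) * s := by rw [h1]
  set Q : Matrix (Fin n) (Fin n) ℂ := 1 - S * G with hQdef
  have hQH : Qᴴ = Q := by
    rw [hQdef, conjTranspose_sub, conjTranspose_one, h3]
  have hQQ : Q * Q = Q := by
    rw [hQdef]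
    have e : (1 - S * G) * (1 - S * G) = 1 - S * G - S * G + S * G * S * G := by noncomm_ring
    rw [e, h1]; noncomm_ring
  have hdiff : σ - (s * G * s) * ρ * (s * G * s) = s * Q * s := by
    rw [hkey, ← hs2, hQdef]; noncomm_ring
  refine ⟨hRpsd, ?_, ?_, ?_⟩
  · -- AbsCont (R ρ R) ρ
    intro x hx hx0
    obtain ⟨y, hy⟩ := hx
    rw [mulVecLin_apply] at hy
    set z := (G * s).mulVec y with hzdef
    have hxeq : x = (s * S).mulVec z := by
      rw [hzdef, mulVec_mulVec, ← hy, hkey]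
      congr 1
      noncomm_ring
    by_contra hlt
    have hnn : (0 : ℂ) ≤ star x ⬝ᵥ ρ.mulVec x := hρ.dotProduct_mulVec_nonneg x
    have hre : 0 ≤ (star x ⬝ᵥ ρ.mulVec x).re ∧ (star x ⬝ᵥ ρ.mulVec x).im = 0 := by
      rw [Complex.le_def] at hnn
      exact ⟨by simpa using hnn.1, by simpa using hnn.2.symm⟩
    have hq0 : star x ⬝ᵥ ρ.mulVec x = 0 := by
      have : (star x ⬝ᵥ ρ.mulVec x).re = 0 := le_antisymm (not_lt.mp hlt) hre.1
      exact Complex.ext (by simpa using this) (by simpa using hre.2)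
    have hform : star x ⬝ᵥ ρ.mulVec x = star ((S * S).mulVec z) ⬝ᵥ ((S * S).mulVec z) := by
      rw [hxeq, quad_congr]
      have e : (s * S)ᴴ * ρ * (s * S) = (S * S)ᴴ * (S * S) := by
        rw [conjTranspose_mul, hsH, hSH]
        calc S * s * ρ * (s * S) = S * (s * ρ * s) * S := by noncomm_ring
        _ = S * (S * S) * S := by rw [hS2]
        _ = (S * S)ᴴ * (S * S) := by
            rw [conjTranspose_mul, hSH]; noncomm_ring
      rw [e, quad_self]
    have hSSz : (S * S).mulVec z = 0 := by
      rw [hform] at hq0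
      exact dotProduct_star_self_eq_zero.mp hq0
    have hSz : S.mulVec z = 0 := by
      have h0 : star z ⬝ᵥ (S * S).mulVec z = 0 := by rw [hSSz, dotProduct_zero]
      have h0' : star z ⬝ᵥ (Sᴴ * S).mulVec z = 0 := by rw [hSH]; exact h0
      rw [quad_self] at h0'
      exact dotProduct_star_self_eq_zero.mp h0'
    apply hx0
    rw [hxeq, ← mulVec_mulVec, hSz, mulVec_zero]
  · rw [hdiff]
    have e : (s * Q) * (s * Q)ᴴ = s * Q * s := by
      rw [conjTranspose_mul, hQH, hsH,
        show s * Q * (Q * s) = s * (Q * Q) * s from by noncomm_ring, hQQ]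
    rw [← e]
    exact posSemidef_self_mul_conjTranspose _
  · rw [hdiff]
    have e : (s * Q * s * ρ).trace = (Q * (s * ρ * s)).trace := by
      rw [show s * Q * s * ρ = s * (Q * s * ρ) from by noncomm_ring, trace_mul_comm,
        show Q * s * ρ * s = Q * (s * ρ * s) from by noncomm_ring]
    rw [e, ← hS2]
    have e2 : Q * (S * S) = 0 := by
      rw [hQdef]
      have e3 : (1 - S * G) * (S * S) = S * S - (S * G * S) * S := by noncomm_ring
      rw [e3, h1]; noncomm_ring
    rw [e2, trace_zero]
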